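/- The group G has a linear isodiametric function: there exists a constant C > 0 such that for every word w in the free group F on {θ1, θ2, a, k} whose image in G is trivial, w is equal in F to a product of finitely many elements of the form xᵢ⁻¹·rᵢ^{±1}·xᵢ, where each rᵢ is one of the four defining relators and each conjugator satisfies |xᵢ| ≤ C·|w| + C. -/

import Mathlib

/-- The four generators θ₁, θ₂, a, k of the free group `F` on four letters. -/
def theta1 : FreeGroup (Fin 4) := FreeGroup.of 0
def theta2 : FreeGroup (Fin 4) := FreeGroup.of 1
def aF : FreeGroup (Fin 4) := FreeGroup.of 2
def kF : FreeGroup (Fin 4) := FreeGroup.of 3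

/-- The four defining relators θᵢ⁻¹aθᵢa⁻¹ and θᵢ⁻¹kθᵢa⁻¹k⁻¹, i = 1,2. -/
def rels : Set (FreeGroup (Fin 4)) :=
  {theta1⁻¹ * aF * theta1 * aF⁻¹, theta2⁻¹ * aF * theta2 * aF⁻¹,
   theta1⁻¹ * kF * theta1 * aF⁻¹ * kF⁻¹, theta2⁻¹ * kF * theta2 * aF⁻¹ * kF⁻¹}

/-- The group `G = ⟨θ₁, θ₂, a, k ∣ aᶿⁱ = a, kᶿⁱ = ka⟩`. -/
abbrev G : Type := PresentedGroup rels

/-- The quotient map `F → G`. -/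
def π : FreeGroup (Fin 4) →* G := PresentedGroup.mk rels

namespace Iso

abbrev F4 := FreeGroup (Fin 4)
abbrev F2 := FreeGroup (Fin 2)

/-- conjugate of a relator (or inverse) with conjugator of norm ≤ m -/
def IsConjRel (m : ℕ) (g : F4) : Prop :=
  ∃ x : F4, FreeGroup.norm x ≤ m ∧ ∃ r ∈ rels, g = x⁻¹ * r * x ∨ g = x⁻¹ * r⁻¹ * x

theorem IsConjRel.mono {m m' : ℕ} (h : m ≤ m') {g : F4} : IsConjRel m g → IsConjRel m' g := by
  rintro ⟨x, hx, r, hr, ho⟩; exact ⟨x, le_trans hx h, r, hr, ho⟩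

theorem IsConjRel.inv {m : ℕ} {g : F4} : IsConjRel m g → IsConjRel m g⁻¹ := by
  rintro ⟨x, hx, r, hr, ho⟩
  refine ⟨x, hx, r, hr, ?_⟩
  rcases ho with h | h <;> rw [h] <;> [right; left] <;> group

/-- `D m w` : w is a product of conjugates of relators with conjugators of norm ≤ m. -/
def D (m : ℕ) (w : F4) : Prop :=
  ∃ L : List F4, L.prod = w ∧ ∀ g ∈ L, IsConjRel m g

theorem D.one (m : ℕ) : D m 1 := ⟨[], rfl, by simp⟩

theorem D.of_eq_one {m : ℕ} {w : F4} (h : w = 1) : D m w := h ▸ D.one m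

theorem D.mono {m m' : ℕ} (h : m ≤ m') {w : F4} : D m w → D m' w := by
  rintro ⟨L, hL, hh⟩; exact ⟨L, hL, fun g hg => (hh g hg).mono h⟩

theorem D.mul {m : ℕ} {w v : F4} (h1 : D m w) (h2 : D m v) : D m (w * v) := by
  rcases h1 with ⟨L1, hL1, hh1⟩; rcases h2 with ⟨L2, hL2, hh2⟩
  refine ⟨L1 ++ L2, by rw [List.prod_append, hL1, hL2], ?_⟩
  intro g hg; rcases List.mem_append.1 hg with h | h
  · exact hh1 g h
  · exact hh2 g h

theorem D.inv {m : ℕ} {w : F4} (h : D m w) : D m w⁻¹ := by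
  rcases h with ⟨L, hL, hh⟩
  refine ⟨(L.map (·⁻¹)).reverse, ?_, ?_⟩
  · rw [List.prod_reverse_noncomm]; simp [← hL]
  · intro g hg
    simp only [List.mem_reverse, List.mem_map] at hg
    rcases hg with ⟨x, hx, rfl⟩
    exact (hh x hx).inv

/-- conjugation costs the norm of the conjugator -/
theorem D.conjL {m m' : ℕ} {w : F4} (c : F4) (h : D m w)
    (hm : FreeGroup.norm c + m ≤ m') : D m' (c * w * c⁻¹) := by
  rcases h with ⟨L, hL, hh⟩
  refine ⟨L.map (fun g => c * g * c⁻¹), ?_, ?_⟩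
  · rw [← hL]; clear hL hh; induction L with
    | nil => simp
    | cons x t ih => simp only [List.map_cons, List.prod_cons, ih]; group
  · intro g hg
    simp only [List.mem_map] at hg
    rcases hg with ⟨y, hy, rfl⟩
    rcases hh y hy with ⟨x, hx, r, hr, ho⟩
    refine ⟨x * c⁻¹, ?_, r, hr, ?_⟩
    · calc FreeGroup.norm (x * c⁻¹) ≤ _ := FreeGroup.norm_mul_le _ _
        _ ≤ m' := by rw [FreeGroup.norm_inv_eq]; omega
    · rcases ho with h | h <;> rw [h] <;> [left; right] <;> group

/-- `Deq m u v`: `u` and `v` differ by a product of bounded conjugates (on the left). -/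
def Deq (m : ℕ) (u v : F4) : Prop := D m (u * v⁻¹)

theorem Deq.refl (m : ℕ) (u : F4) : Deq m u u := D.of_eq_one (by group)

theorem Deq.of_eq {m : ℕ} {u v : F4} (h : u = v) : Deq m u v := h ▸ Deq.refl m v

theorem Deq.symm {m : ℕ} {u v : F4} (h : Deq m u v) : Deq m v u := by
  have := h.inv
  unfold Deq
  have e : v * u⁻¹ = (u * v⁻¹)⁻¹ := by group
  rw [e]; exact this

theorem Deq.mono {m m' : ℕ} (h : m ≤ m') {u v : F4} : Deq m u v → Deq m' u v :=
  D.mono h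

theorem Deq.trans {m : ℕ} {u v z : F4} (h1 : Deq m u v) (h2 : Deq m v z) : Deq m u z := by
  have := h1.mul h2
  unfold Deq at *
  have e : u * v⁻¹ * (v * z⁻¹) = u * z⁻¹ := by group
  rwa [e] at this

theorem Deq.mul_right {m : ℕ} {u v : F4} (c : F4) (h : Deq m u v) : Deq m (u * c) (v * c) := by
  unfold Deq at *
  have e : u * c * (v * c)⁻¹ = u * v⁻¹ := by group
  rwa [e]

/-- context lemma : fills can be applied in context; costs the norm of the left context. -/
theorem Deq.ctx {m m' : ℕ} {u v : F4} (c d : F4) (h : Deq m u v)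
    (hm : FreeGroup.norm c + m ≤ m') : Deq m' (c * u * d) (c * v * d) := by
  unfold Deq at *
  have e : c * u * d * (c * v * d)⁻¹ = c * (u * v⁻¹) * c⁻¹ := by group
  rw [e]; exact h.conjL c hm

theorem Deq.ctxL {m m' : ℕ} {u v : F4} (c : F4) (h : Deq m u v)
    (hm : FreeGroup.norm c + m ≤ m') : Deq m' (c * u) (c * v) := by
  have := h.ctx c 1 hm
  simpa using this

theorem Deq.inv' {m m' : ℕ} {u v : F4} (h : Deq m u v)
    (hm : FreeGroup.norm u + m ≤ m') : Deq m' u⁻¹ v⁻¹ := by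
  unfold Deq at *
  have e : u⁻¹ * (v⁻¹)⁻¹ = u⁻¹ * ((u * v⁻¹)⁻¹) * u := by group
  rw [e]
  have h2 := h.inv
  rcases h2 with ⟨L, hL, hh⟩
  refine ⟨L.map (fun g => u⁻¹ * g * u), ?_, ?_⟩
  · rw [← hL]; clear hL hh; induction L with
    | nil => simp
    | cons x t ih => simp only [List.map_cons, List.prod_cons, ih]; group
  · intro g hg
    simp only [List.mem_map] at hg
    rcases hg with ⟨y, hy, rfl⟩
    rcases hh y hy with ⟨x, hx, r, hr, ho⟩
    refine ⟨x * u, ?_, r, hr, ?_⟩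
    · calc FreeGroup.norm (x * u) ≤ _ := FreeGroup.norm_mul_le _ _
        _ ≤ m' := by omega
    · rcases ho with h | h <;> rw [h] <;> [left; right] <;> group

/-- a single conjugated relator move -/
theorem Deq.single {m : ℕ} {u v : F4} (x r : F4) (hr : r ∈ rels)
    (hx : FreeGroup.norm x ≤ m)
    (h : u * v⁻¹ = x⁻¹ * r * x ∨ u * v⁻¹ = x⁻¹ * r⁻¹ * x) : Deq m u v :=
  ⟨[u * v⁻¹], by simp, by rintro g hg; simp at hg; exact ⟨x, hx, r, hr, hg ▸ h⟩⟩

theorem D.of_deq_one {m : ℕ} {w : F4} (h : Deq m w 1) : D m w := by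
  unfold Deq at h; simpa using h

theorem Deq.d {m : ℕ} {u v : F4} (h : Deq m u v) (hv : D m v) : D m u := by
  have := h.mul hv
  have e : u * v⁻¹ * v = u := by group
  rwa [e] at this

end Iso
namespace Iso

/-! ### letters -/

def sg (b : Bool) : ℤ := cond b 1 (-1)
def θ4 (j : Fin 2) : Fin 4 := ⟨j.val, by omega⟩
def θof (j : Fin 2) : F4 := FreeGroup.of (θ4 j)
def tl (j : Fin 2) (b : Bool) : F4 := cond b (θof j) (θof j)⁻¹
def al (s : Bool) : F4 := cond s aF aF⁻¹
def kl (s : Bool) : F4 := cond s kF kF⁻¹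

theorem tl_inv (j : Fin 2) (b : Bool) : (tl j b)⁻¹ = tl j (!b) := by
  cases b <;> simp [tl]

theorem al_eq (s : Bool) : al s = aF ^ (sg s) := by cases s <;> simp [al, sg]

def ra (j : Fin 2) : F4 := (θof j)⁻¹ * aF * θof j * aF⁻¹
def rk (j : Fin 2) : F4 := (θof j)⁻¹ * kF * θof j * aF⁻¹ * kF⁻¹

theorem θof_zero : θof 0 = theta1 := rfl
theorem θof_one : θof 1 = theta2 := rfl

theorem ra_mem (j : Fin 2) : ra j ∈ rels := by
  fin_cases j
  · exact Set.mem_insert _ _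
  · exact Set.mem_insert_of_mem _ (Set.mem_insert _ _)

theorem rk_mem (j : Fin 2) : rk j ∈ rels := by
  fin_cases j
  · exact Set.mem_insert_of_mem _ (Set.mem_insert_of_mem _ (Set.mem_insert _ _))
  · exact Set.mem_insert_of_mem _ (Set.mem_insert_of_mem _
      (Set.mem_insert_of_mem _ rfl))

/-! ### norm facts -/

theorem norm_of' (x : Fin 4) : FreeGroup.norm (FreeGroup.of x) = 1 := FreeGroup.norm_of x

theorem norm_zpow_of (x : Fin 4) (c : ℤ) :
    FreeGroup.norm ((FreeGroup.of x) ^ c) ≤ c.natAbs := by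
  rcases c with n | n
  · rw [Int.ofNat_eq_coe, zpow_natCast, FreeGroup.norm_of_pow]; simp
  · rw [zpow_negSucc, FreeGroup.norm_inv_eq, FreeGroup.norm_of_pow]; simp

theorem norm_aF_zpow (c : ℤ) : FreeGroup.norm (aF ^ c) ≤ c.natAbs := norm_zpow_of 2 c

theorem norm_theta1_zpow (c : ℤ) : FreeGroup.norm (theta1 ^ c) ≤ c.natAbs := norm_zpow_of 0 c

theorem norm_tl (j : Fin 2) (b : Bool) : FreeGroup.norm (tl j b) ≤ 1 := by
  cases b <;> simp [tl, θof, FreeGroup.norm_inv_eq, FreeGroup.norm_of]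

theorem norm_al (s : Bool) : FreeGroup.norm (al s) ≤ 1 := by
  cases s <;> simp [al, aF, FreeGroup.norm_inv_eq, FreeGroup.norm_of]

theorem norm_kl (s : Bool) : FreeGroup.norm (kl s) ≤ 1 := by
  cases s <;> simp [kl, kF, FreeGroup.norm_inv_eq, FreeGroup.norm_of]

/-! ### micro moves -/

/-- commuting a θ-letter with an a-letter -/
theorem mvA (j : Fin 2) (b s : Bool) : Deq 2 (tl j b * al s) (al s * tl j b) := by
  cases b <;> cases s
  · -- θ⁻¹ a⁻¹ ≡ a⁻¹ θ⁻¹ ; x = aF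
    refine Deq.single aF (ra j) (ra_mem j) (by simp [aF, FreeGroup.norm_of]) (Or.inr ?_)
    simp only [tl, al, cond, ra]; group
  · -- θ⁻¹ a ≡ a θ⁻¹ ; x = 1
    refine Deq.single 1 (ra j) (ra_mem j) (by simp) (Or.inl ?_)
    simp only [tl, al, cond, ra]; group
  · -- θ a⁻¹ ≡ a⁻¹ θ ; x = aF * θ⁻¹
    refine Deq.single (aF * (θof j)⁻¹) (ra j) (ra_mem j) ?_ (Or.inl ?_)
    · calc FreeGroup.norm (aF * (θof j)⁻¹) ≤ _ := FreeGroup.norm_mul_le _ _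
        _ ≤ 2 := by
          simp [aF, θof, FreeGroup.norm_inv_eq, FreeGroup.norm_of]
    · simp only [tl, al, cond, ra]; group
  · -- θ a ≡ a θ ; x = θ⁻¹, inverse relator
    refine Deq.single ((θof j)⁻¹) (ra j) (ra_mem j)
      (by simp [θof, FreeGroup.norm_inv_eq, FreeGroup.norm_of]) (Or.inr ?_)
    simp only [tl, al, cond, ra]; group

/-- `k·θ ≡ θ·k·a` -/
theorem mvK1 (j : Fin 2) : Deq 1 (kF * θof j) (θof j * kF * aF) := by
  refine Deq.single ((θof j)⁻¹) (rk j) (rk_mem j)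
    (by simp [θof, FreeGroup.norm_inv_eq, FreeGroup.norm_of]) (Or.inl ?_)
  simp only [rk]; group

end Iso
namespace Iso

theorem icr_pos {m : ℕ} (x r : F4) (hr : r ∈ rels) (hx : FreeGroup.norm x ≤ m) :
    IsConjRel m (x⁻¹ * r * x) := ⟨x, hx, r, hr, Or.inl rfl⟩

theorem icr_neg {m : ℕ} (x r : F4) (hr : r ∈ rels) (hx : FreeGroup.norm x ≤ m) :
    IsConjRel m (x⁻¹ * r⁻¹ * x) := ⟨x, hx, r, hr, Or.inr rfl⟩

theorem Deq.two {m : ℕ} {u v c1 c2 : F4} (h1 : IsConjRel m c1) (h2 : IsConjRel m c2)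
    (he : u * v⁻¹ = c1 * c2) : Deq m u v :=
  ⟨[c1, c2], by simp [he], by
    rintro g hg
    rcases List.mem_pair.1 hg with rfl | rfl <;> assumption⟩

theorem nm1 {x : Fin 4} : FreeGroup.norm (FreeGroup.of x) ≤ 1 := le_of_eq (FreeGroup.norm_of x)
theorem nm1' {x : Fin 4} : FreeGroup.norm (FreeGroup.of x)⁻¹ ≤ 1 := by
  rw [FreeGroup.norm_inv_eq]; exact nm1
theorem nmm {x y : F4} {a b : ℕ} (hx : FreeGroup.norm x ≤ a) (hy : FreeGroup.norm y ≤ b) :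
    FreeGroup.norm (x * y) ≤ a + b :=
  le_trans (FreeGroup.norm_mul_le x y) (Nat.add_le_add hx hy)

/-! ### derived k moves -/

/-- `θ^{β}·k ≡ k·a^{-β}·θ^{β}` -/
theorem mvKt (j : Fin 2) (b : Bool) :
    Deq 8 (tl j b * kF) (kF * aF ^ (-(sg b)) * tl j b) := by
  cases b
  · -- θ⁻¹ k ≡ k a θ⁻¹ : single relator
    refine Deq.single 1 (rk j) (rk_mem j) (by simp) (Or.inl ?_)
    simp only [tl, cond, sg, rk]; norm_num; group
  · -- θ k ≡ k a⁻¹ θ : two factors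
    refine Deq.two (icr_neg (θof j)⁻¹ (rk j) (rk_mem j) (le_trans nm1' (by norm_num)))
      (icr_pos ((θof j)⁻¹ * aF * kF⁻¹) (ra j) (ra_mem j)
        (le_trans (nmm (nmm nm1' nm1) nm1') (by norm_num))) ?_
    simp only [tl, cond, sg, rk, ra]; norm_num; group

/-- `θ^{β}·k⁻¹ ≡ a^{β}·k⁻¹·θ^{β}` -/
theorem mvKt' (j : Fin 2) (b : Bool) :
    Deq 8 (tl j b * kF⁻¹) (aF ^ (sg b) * kF⁻¹ * tl j b) := by
  cases b
  · -- θ⁻¹ k⁻¹ ≡ a⁻¹ k⁻¹ θ⁻¹ : single, x = k a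
    refine Deq.single (kF * aF) (rk j) (rk_mem j) (le_trans (nmm nm1 nm1) (by norm_num))
      (Or.inr ?_)
    simp only [tl, cond, sg, rk]; norm_num; group
  · -- θ k⁻¹ ≡ a k⁻¹ θ : two factors
    refine Deq.two (icr_neg (θof j)⁻¹ (ra j) (ra_mem j) (le_trans nm1' (by norm_num)))
      (icr_pos ((θof j)⁻¹ * kF * aF⁻¹) (rk j) (rk_mem j)
        (le_trans (nmm (nmm nm1' nm1) nm1') (by norm_num))) ?_
    simp only [tl, cond, sg, rk, ra]; norm_num; group

end Iso
namespace Iso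

/-! ### θ-words as lists and transports -/

def ΘW (l : List (Fin 2 × Bool)) : F4 := (l.map fun p => tl p.1 p.2).prod
def eL (l : List (Fin 2 × Bool)) : ℤ := (l.map fun p => sg p.2).sum

theorem ΘW_nil : ΘW [] = 1 := rfl
theorem ΘW_cons (p : Fin 2 × Bool) (t : List (Fin 2 × Bool)) :
    ΘW (p :: t) = tl p.1 p.2 * ΘW t := by simp [ΘW]
theorem eL_nil : eL [] = 0 := rfl
theorem eL_cons (p : Fin 2 × Bool) (t : List (Fin 2 × Bool)) :
    eL (p :: t) = sg p.2 + eL t := by simp [eL]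

theorem norm_ΘW (l : List (Fin 2 × Bool)) : FreeGroup.norm (ΘW l) ≤ l.length := by
  induction l with
  | nil => simp [ΘW_nil, FreeGroup.norm_one]
  | cons p t ih =>
    rw [ΘW_cons]
    calc FreeGroup.norm (tl p.1 p.2 * ΘW t) ≤ _ := FreeGroup.norm_mul_le _ _
      _ ≤ 1 + t.length := Nat.add_le_add (norm_tl _ _) ih
      _ = (p :: t).length := by simp [Nat.add_comm]

theorem eL_natAbs_le (l : List (Fin 2 × Bool)) : (eL l).natAbs ≤ l.length := by
  induction l with
  | nil => simp [eL_nil]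
  | cons p t ih =>
    rw [eL_cons]
    have : (sg p.2).natAbs = 1 := by cases p.2 <;> simp [sg]
    have h := Int.natAbs_add_le (sg p.2) (eL t)
    simp only [List.length_cons]
    omega

theorem sg_natAbs (b : Bool) : (sg b).natAbs = 1 := by cases b <;> simp [sg]

/-- a-power past a single θ-letter -/
theorem mvAz (j : Fin 2) (b : Bool) (c : ℤ) :
    Deq (c.natAbs + 3) (tl j b * aF ^ c) (aF ^ c * tl j b) := by
  induction c using Int.induction_on with
  | zero => exact Deq.of_eq (by group)
  | succ n ih =>
    set M := ((n : ℤ) + 1).natAbs + 3 with hM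
    have hMv : M = n + 4 := by simp [hM]; omega
    have e1 : aF ^ ((n : ℤ) + 1) = aF ^ (n : ℤ) * aF := by rw [zpow_add_one]
    have step1 : Deq M (tl j b * aF ^ (n : ℤ) * aF) (aF ^ (n : ℤ) * tl j b * aF) :=
      (ih.mul_right aF).mono (by simp; omega)
    have step2 : Deq M (aF ^ (n : ℤ) * (tl j b * aF)) (aF ^ (n : ℤ) * (aF * tl j b)) := by
      have hA := mvA j b true
      have hat : al true = aF := rfl
      rw [hat] at hA
      refine hA.ctxL (aF ^ (n : ℤ)) ?_
      have := norm_aF_zpow (n : ℤ)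
      simp only [Int.natAbs_natCast] at this
      omega
    exact ((Deq.of_eq (by rw [e1]; group)).trans step1).trans
        ((Deq.of_eq (by group)).trans (step2.trans (Deq.of_eq (by rw [e1]; group))))
  | pred n ih =>
    set M := (-(n:ℤ) - 1).natAbs + 3 with hM
    have hMv : M = n + 4 := by simp [hM]; omega
    have e1 : aF ^ (-(n : ℤ) - 1) = aF ^ (-(n : ℤ)) * aF⁻¹ := by rw [zpow_sub_one]
    have step1 : Deq M (tl j b * aF ^ (-(n:ℤ)) * aF⁻¹) (aF ^ (-(n:ℤ)) * tl j b * aF⁻¹) :=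
      (ih.mul_right aF⁻¹).mono (by simp; omega)
    have step2 : Deq M
        (aF ^ (-(n:ℤ)) * (tl j b * aF⁻¹)) (aF ^ (-(n:ℤ)) * (aF⁻¹ * tl j b)) := by
      have hA := mvA j b false
      have hat : al false = aF⁻¹ := rfl
      rw [hat] at hA
      refine hA.ctxL (aF ^ (-(n:ℤ))) ?_
      have := norm_aF_zpow (-(n : ℤ))
      simp only [Int.natAbs_neg, Int.natAbs_natCast] at this
      omega
    exact ((Deq.of_eq (by rw [e1]; group)).trans step1).trans
        ((Deq.of_eq (by group)).trans (step2.trans (Deq.of_eq (by rw [e1]; group))))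

/-- a-power past a θ-word -/
theorem mvAzL (l : List (Fin 2 × Bool)) (c : ℤ) :
    Deq (l.length + c.natAbs + 4) (ΘW l * aF ^ c) (aF ^ c * ΘW l) := by
  induction l with
  | nil => exact Deq.of_eq (by rw [ΘW_nil]; group)
  | cons p t ih =>
    set M := (p :: t).length + c.natAbs + 4 with hM
    have hMv : M = t.length + c.natAbs + 5 := by simp [hM]; omega
    have step1 : Deq M
        (tl p.1 p.2 * (ΘW t * aF ^ c)) (tl p.1 p.2 * (aF ^ c * ΘW t)) := by
      refine ih.ctxL _ ?_
      have := norm_tl p.1 p.2; omega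
    have step2 : Deq M
        (tl p.1 p.2 * aF ^ c * ΘW t) (aF ^ c * tl p.1 p.2 * ΘW t) :=
      ((mvAz p.1 p.2 c).mul_right _).mono (by omega)
    exact (((Deq.of_eq (by rw [ΘW_cons]; group)).trans step1).trans
      ((Deq.of_eq (by group)).trans (step2.trans
        (Deq.of_eq (by rw [ΘW_cons]; group)))))

/-- k past a θ-word -/
theorem mvKzL (l : List (Fin 2 × Bool)) :
    Deq (4 * l.length + 15) (ΘW l * kF) (kF * aF ^ (-(eL l)) * ΘW l) := by
  induction l with
  | nil => exact Deq.of_eq (by rw [ΘW_nil, eL_nil]; group)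
  | cons p t ih =>
    have hel := eL_natAbs_le t
    set M := 4 * (p :: t).length + 15 with hM
    have hMv : M = 4 * t.length + 19 := by simp [hM]; omega
    have step1 : Deq M
        (tl p.1 p.2 * (ΘW t * kF)) (tl p.1 p.2 * (kF * aF ^ (-(eL t)) * ΘW t)) := by
      refine ih.ctxL _ ?_
      have := norm_tl p.1 p.2; omega
    have step2 : Deq M
        (tl p.1 p.2 * kF * (aF ^ (-(eL t)) * ΘW t))
        (kF * aF ^ (-(sg p.2)) * tl p.1 p.2 * (aF ^ (-(eL t)) * ΘW t)) :=
      ((mvKt p.1 p.2).mul_right _).mono (by omega)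
    have step3 : Deq M
        (kF * aF ^ (-(sg p.2)) * (tl p.1 p.2 * aF ^ (-(eL t))) * ΘW t)
        (kF * aF ^ (-(sg p.2)) * (aF ^ (-(eL t)) * tl p.1 p.2) * ΘW t) := by
      refine (mvAz p.1 p.2 (-(eL t))).ctx (kF * aF ^ (-(sg p.2))) (ΘW t) ?_
      have h1 : FreeGroup.norm (kF * aF ^ (-(sg p.2))) ≤ 2 := by
        refine le_trans (FreeGroup.norm_mul_le _ _) ?_
        have h2 := norm_aF_zpow (-(sg p.2))
        have h3 : (-(sg p.2)).natAbs = 1 := by cases p.2 <;> simp [sg]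
        have h4 : FreeGroup.norm kF = 1 := FreeGroup.norm_of 3
        omega
      have h5 := Int.natAbs_neg (eL t)
      omega
    have efin : aF ^ (-(sg p.2)) * aF ^ (-(eL t)) = aF ^ (-(eL (p :: t))) := by
      rw [eL_cons, ← zpow_add]; ring_nf
    refine (((Deq.of_eq (by rw [ΘW_cons]; group)).trans step1).trans
      (((Deq.of_eq (by group)).trans step2).trans
      (((Deq.of_eq (by group)).trans step3).trans (Deq.of_eq ?_))))
    rw [ΘW_cons, ← efin]; group

/-- k⁻¹ past a θ-word -/
theorem mvKzL' (l : List (Fin 2 × Bool)) :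
    Deq (4 * l.length + 15) (ΘW l * kF⁻¹) (aF ^ (eL l) * kF⁻¹ * ΘW l) := by
  induction l with
  | nil => exact Deq.of_eq (by rw [ΘW_nil, eL_nil]; group)
  | cons p t ih =>
    have hel := eL_natAbs_le t
    set M := 4 * (p :: t).length + 15 with hM
    have hMv : M = 4 * t.length + 19 := by simp [hM]; omega
    have step1 : Deq M
        (tl p.1 p.2 * (ΘW t * kF⁻¹)) (tl p.1 p.2 * (aF ^ (eL t) * kF⁻¹ * ΘW t)) := by
      refine ih.ctxL _ ?_
      have := norm_tl p.1 p.2; omega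
    have step2 : Deq M
        (tl p.1 p.2 * aF ^ (eL t) * (kF⁻¹ * ΘW t))
        (aF ^ (eL t) * tl p.1 p.2 * (kF⁻¹ * ΘW t)) :=
      ((mvAz p.1 p.2 (eL t)).mul_right _).mono (by omega)
    have step3 : Deq M
        (aF ^ (eL t) * (tl p.1 p.2 * kF⁻¹) * ΘW t)
        (aF ^ (eL t) * (aF ^ (sg p.2) * kF⁻¹ * tl p.1 p.2) * ΘW t) := by
      refine (mvKt' p.1 p.2).ctx (aF ^ (eL t)) (ΘW t) ?_
      have := norm_aF_zpow (eL t)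
      omega
    have efin : aF ^ (eL t) * aF ^ (sg p.2) = aF ^ (eL (p :: t)) := by
      rw [eL_cons, ← zpow_add]; ring_nf
    refine (((Deq.of_eq (by rw [ΘW_cons]; group)).trans step1).trans
      (((Deq.of_eq (by group)).trans step2).trans
      (((Deq.of_eq (by group)).trans step3).trans (Deq.of_eq ?_))))
    rw [ΘW_cons, ← efin]; group

end Iso
namespace Iso

/-! ### homomorphisms -/

def a2 : F2 := FreeGroup.of 0
def k2 : F2 := FreeGroup.of 1

def ι : F2 →* F4 := FreeGroup.lift ![aF, kF]
def θsub : F2 →* F4 := FreeGroup.lift θof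

@[simp] theorem ι_a2 : ι a2 = aF := by simp [ι, a2]
@[simp] theorem ι_k2 : ι k2 = kF := by simp [ι, k2]
@[simp] theorem θsub_of (j : Fin 2) : θsub (FreeGroup.of j) = θof j := by simp [θsub]

def ε2 : F2 →* Multiplicative ℤ := FreeGroup.lift (fun _ => Multiplicative.ofAdd 1)

/-- θ-exponent sum -/
def EE (u : F2) : ℤ := Multiplicative.toAdd (ε2 u)

theorem EE_mul (u v : F2) : EE (u * v) = EE u + EE v := by
  simp [EE, map_mul]

theorem EE_of (j : Fin 2) : EE (FreeGroup.of j) = 1 := by simp [EE, ε2]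

theorem EE_one : EE 1 = 0 := by simp [EE]

theorem EE_inv_of (j : Fin 2) : EE (FreeGroup.of j)⁻¹ = -1 := by simp [EE, ε2]

theorem mk_single_true (j : Fin 2) : FreeGroup.mk [(j, true)] = FreeGroup.of j := rfl

theorem mk_single_false (j : Fin 2) : FreeGroup.mk [(j, false)] = (FreeGroup.of j)⁻¹ := by
  rw [← mk_single_true, FreeGroup.inv_mk]
  simp [FreeGroup.invRev]

theorem mk_cons (p : Fin 2 × Bool) (t : List (Fin 2 × Bool)) :
    FreeGroup.mk (p :: t) = FreeGroup.mk [p] * FreeGroup.mk t := by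
  rw [FreeGroup.mul_mk]; rfl

theorem ΘW_eq (L : List (Fin 2 × Bool)) : ΘW L = θsub (FreeGroup.mk L) := by
  induction L with
  | nil =>
    rw [ΘW_nil]
    have : FreeGroup.mk ([] : List (Fin 2 × Bool)) = 1 := rfl
    rw [this, map_one]
  | cons p t ih =>
    rw [ΘW_cons, mk_cons, map_mul, ih]
    congr 1
    rcases p with ⟨j, b⟩
    cases b
    · rw [mk_single_false, map_inv, θsub_of]; rfl
    · rw [mk_single_true, θsub_of]; rfl

theorem ΘW_toWord (u : F2) : ΘW u.toWord = θsub u := by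
  rw [ΘW_eq, FreeGroup.mk_toWord]

theorem eL_eq (L : List (Fin 2 × Bool)) : eL L = EE (FreeGroup.mk L) := by
  induction L with
  | nil =>
    rw [eL_nil]
    have : FreeGroup.mk ([] : List (Fin 2 × Bool)) = 1 := rfl
    rw [this, EE_one]
  | cons p t ih =>
    rw [eL_cons, mk_cons, EE_mul, ih]
    congr 1
    rcases p with ⟨j, b⟩
    cases b
    · rw [mk_single_false, EE_inv_of]; rfl
    · rw [mk_single_true, EE_of]; rfl

theorem eL_toWord (u : F2) : eL u.toWord = EE u := by
  rw [eL_eq, FreeGroup.mk_toWord]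

theorem EE_natAbs_le (u : F2) : (EE u).natAbs ≤ FreeGroup.norm u := by
  rw [← eL_toWord]
  exact eL_natAbs_le u.toWord

theorem norm_θsub (u : F2) : FreeGroup.norm (θsub u) ≤ FreeGroup.norm u := by
  rw [← ΘW_toWord]
  exact norm_ΘW u.toWord

/-! ### the automorphism a ↦ a, k ↦ ka of F2 -/

def Afor : F2 →* F2 := FreeGroup.lift ![a2, k2 * a2]
def Ainv : F2 →* F2 := FreeGroup.lift ![a2, k2 * a2⁻¹]

theorem AcompInv : Afor.comp Ainv = MonoidHom.id F2 := by
  apply FreeGroup.ext_hom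
  intro j
  fin_cases j <;> simp [Afor, Ainv, a2, k2]

theorem AinvComp : Ainv.comp Afor = MonoidHom.id F2 := by
  apply FreeGroup.ext_hom
  intro j
  fin_cases j <;> simp [Afor, Ainv, a2, k2]

def A : MulAut F2 := MonoidHom.toMulEquiv Afor Ainv AinvComp AcompInv

@[simp] theorem A_a : A a2 = a2 := by simp [A, Afor, a2, MonoidHom.toMulEquiv]
@[simp] theorem A_k : A k2 = k2 * a2 := by simp [A, Afor, k2, MonoidHom.toMulEquiv]
@[simp] theorem Ainv_a : A⁻¹ a2 = a2 := by
  simp [A, Ainv, a2, MonoidHom.toMulEquiv, MulAut.inv_def]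
@[simp] theorem Ainv_k : A⁻¹ k2 = k2 * a2⁻¹ := by
  simp [A, Ainv, k2, MonoidHom.toMulEquiv, MulAut.inv_def]

theorem Az_a (c : ℤ) : (A ^ c) a2 = a2 := by
  induction c using Int.induction_on with
  | zero => rfl
  | succ n ih => rw [zpow_add_one, MulAut.mul_apply, A_a, ih]
  | pred n ih => rw [zpow_sub_one, MulAut.mul_apply, Ainv_a, ih]

theorem Az_zpow_a (c d : ℤ) : (A ^ c) (a2 ^ d) = a2 ^ d := by
  rw [map_zpow, Az_a]

theorem Az_k (c : ℤ) : (A ^ c) k2 = k2 * a2 ^ c := by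
  induction c using Int.induction_on with
  | zero => simp
  | succ n ih =>
    rw [zpow_add_one, MulAut.mul_apply, A_k, map_mul, ih, Az_a, mul_assoc, ← zpow_add_one]
  | pred n ih =>
    rw [zpow_sub_one, MulAut.mul_apply, Ainv_k, map_mul, ih, map_inv, Az_a, mul_assoc,
      ← zpow_sub_one]

end Iso
namespace Iso

/-! ### the semidirect product detector -/

def φA : Multiplicative ℤ →* MulAut F2 := zpowersHom (MulAut F2) A

abbrev S := SemidirectProduct F2 (Multiplicative ℤ) φA

theorem φA_apply (n : Multiplicative ℤ) : φA n = A ^ (Multiplicative.toAdd n) := rfl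

def tψ : Multiplicative ℤ := Multiplicative.ofAdd (-1)

open SemidirectProduct in
def Ψf : F4 →* S := FreeGroup.lift ![inr tψ, inr tψ, inl a2, inl k2]

open SemidirectProduct in
theorem Ψconj (n : F2) : (inr tψ : S)⁻¹ * inl n * inr tψ = inl (A n) := by
  have h := SemidirectProduct.inl_aut (φ := φA) (tψ⁻¹) n
  have hA : φA tψ⁻¹ = A := by
    rw [φA_apply]
    norm_num [tψ]
  rw [hA] at h
  rw [h, map_inv, inv_inv]

open SemidirectProduct in
theorem ΨK : ∀ r ∈ rels, Ψf r = 1 := by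
  intro r hr
  have h0 : Ψf theta1 = inr tψ := by simp [Ψf, theta1]
  have h1 : Ψf theta2 = inr tψ := by simp [Ψf, theta2]
  have h2 : Ψf aF = inl a2 := by simp [Ψf, aF]
  have h3 : Ψf kF = inl k2 := by simp [Ψf, kF]
  rcases hr with rfl | rfl | rfl | h
  · rw [map_mul, map_mul, map_mul, map_inv, map_inv, h0, h2]
    rw [mul_assoc, mul_assoc, ← mul_assoc (inl a2), ← mul_assoc, ← mul_assoc, Ψconj,
      ← map_inv, ← map_mul]
    simp
  · rw [map_mul, map_mul, map_mul, map_inv, map_inv, h1, h2]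
    rw [mul_assoc, mul_assoc, ← mul_assoc (inl a2), ← mul_assoc, ← mul_assoc, Ψconj,
      ← map_inv, ← map_mul]
    simp
  · rw [map_mul, map_mul, map_mul, map_mul, map_inv, map_inv, map_inv, h0, h2, h3]
    rw [show (inr tψ)⁻¹ * inl k2 * inr tψ * (inl a2)⁻¹ * (inl k2)⁻¹
      = ((inr tψ)⁻¹ * inl k2 * inr tψ) * ((inl a2)⁻¹ * (inl k2)⁻¹) by group, Ψconj,
      ← map_inv, ← map_inv, ← map_mul, ← map_mul]
    rw [A_k]
    rw [show k2 * a2 * (a2⁻¹ * k2⁻¹) = 1 by group, map_one]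
  · rw [Set.mem_singleton_iff] at h
    subst h
    rw [map_mul, map_mul, map_mul, map_mul, map_inv, map_inv, map_inv, h1, h2, h3]
    rw [show (inr tψ)⁻¹ * inl k2 * inr tψ * (inl a2)⁻¹ * (inl k2)⁻¹
      = ((inr tψ)⁻¹ * inl k2 * inr tψ) * ((inl a2)⁻¹ * (inl k2)⁻¹) by group, Ψconj,
      ← map_inv, ← map_inv, ← map_mul, ← map_mul]
    rw [A_k]
    rw [show k2 * a2 * (a2⁻¹ * k2⁻¹) = 1 by group, map_one]

/-! ### the θ-projection detector -/

def Qf : F4 →* F2 := FreeGroup.lift ![FreeGroup.of 0, FreeGroup.of 1, 1, 1]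

theorem Qf_theta1 : Qf theta1 = FreeGroup.of 0 := by simp [Qf, theta1]
theorem Qf_theta2 : Qf theta2 = FreeGroup.of 1 := by simp [Qf, theta2]
theorem Qf_aF : Qf aF = 1 := by simp [Qf, aF]
theorem Qf_kF : Qf kF = 1 := by simp [Qf, kF]

theorem QK : ∀ r ∈ rels, Qf r = 1 := by
  intro r hr
  rcases hr with rfl | rfl | rfl | h
  · simp [map_mul, map_inv, Qf_theta1, Qf_aF]
  · simp [map_mul, map_inv, Qf_theta2, Qf_aF]
  · simp [map_mul, map_inv, Qf_theta1, Qf_aF, Qf_kF]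
  · rw [Set.mem_singleton_iff] at h
    subst h
    simp [map_mul, map_inv, Qf_theta2, Qf_aF, Qf_kF]

theorem Qf_θsub (u : F2) : Qf (θsub u) = u := by
  have : Qf.comp θsub = MonoidHom.id F2 := by
    apply FreeGroup.ext_hom
    intro j
    fin_cases j <;>
      simp [θsub, θof, θ4, Qf]
  calc Qf (θsub u) = (Qf.comp θsub) u := rfl
    _ = u := by rw [this]; rfl

/-! ### kernel membership -/

theorem mem_nc_of_pi_one {w : F4} (h : π w = 1) : w ∈ Subgroup.normalClosure rels :=
  (QuotientGroup.eq_one_iff w).1 h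

theorem D.mem_nc {m : ℕ} {w : F4} (h : D m w) : w ∈ Subgroup.normalClosure rels := by
  rcases h with ⟨L, hL, hh⟩
  subst hL
  induction L with
  | nil => exact Subgroup.one_mem _
  | cons g t ih =>
    rw [List.prod_cons]
    refine Subgroup.mul_mem _ ?_ (ih (fun x hx => hh x (List.mem_cons_of_mem g hx)))
    rcases hh g List.mem_cons_self with ⟨x, _, r, hr, hcase⟩
    have hrmem : r ∈ Subgroup.normalClosure rels := Subgroup.subset_normalClosure hr
    have hN : (Subgroup.normalClosure rels).Normal := Subgroup.normalClosure_normal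
    rcases hcase with rfl | rfl
    · have := hN.conj_mem r hrmem x⁻¹
      simpa using this
    · have := hN.conj_mem r⁻¹ (Subgroup.inv_mem _ hrmem) x⁻¹
      simpa using this

theorem kill_of_mem_nc {H : Type} [Group H] (f : Fin 4 → H)
    (hf : ∀ r ∈ rels, FreeGroup.lift f r = 1) {w : F4}
    (hw : w ∈ Subgroup.normalClosure rels) : FreeGroup.lift f w = 1 :=
  PresentedGroup.to_group_eq_one_of_mem_closure hf w hw

end Iso
namespace Iso

/-! ### compressed states -/

structure Blk where
  ε : Bool
  h : ℤ
  d : ℤ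

def bw (b : Blk) : F4 := theta1 ^ (-b.h) * aF ^ b.d * kl b.ε * theta1 ^ b.h
def bv (b : Blk) : F2 := a2 ^ b.d * (cond b.ε (k2 * a2 ^ b.h) (k2 * a2 ^ b.h)⁻¹)
def Bprod (bs : List Blk) : F4 := (bs.map bw).prod
def vB (bs : List Blk) : F2 := (bs.map bv).prod

theorem Bprod_nil : Bprod [] = 1 := rfl
theorem Bprod_append (bs : List Blk) (b : Blk) :
    Bprod (bs ++ [b]) = Bprod bs * bw b := by simp [Bprod]
theorem vB_append (bs : List Blk) (b : Blk) :
    vB (bs ++ [b]) = vB bs * bv b := by simp [vB]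

structure St where
  bs : List Blk
  dl : ℤ
  u : F2

def σw (s : St) : F4 := Bprod s.bs * aF ^ s.dl * θsub s.u

/-! ### sizes -/

def go : ℤ → List Blk → ℕ
  | p, [] => p.natAbs
  | p, b :: t => (p - b.h).natAbs + b.d.natAbs + 1 + go b.h t

def hl' : ℤ → List Blk → ℤ
  | p, [] => p
  | _, b :: t => hl' b.h t

def Led (s : St) : ℕ :=
  go 0 s.bs + s.dl.natAbs + FreeGroup.norm s.u
    + 2 * (hl' 0 s.bs + EE s.u).natAbs + 2 * (EE s.u).natAbs

theorem hl'_le_go : ∀ (bs : List Blk) (p : ℤ), (hl' p bs).natAbs ≤ go p bs := by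
  intro bs
  induction bs with
  | nil => intro p; simp [hl', go]
  | cons b t ih => intro p; simp only [hl', go]; have := ih b.h; omega

theorem go_append : ∀ (bs : List Blk) (p : ℤ) (b : Blk),
    go p (bs ++ [b]) + (hl' p bs).natAbs
      = go p bs + (hl' p bs - b.h).natAbs + b.d.natAbs + 1 + b.h.natAbs := by
  intro bs
  induction bs with
  | nil => intro p b; simp [go, hl']; omega
  | cons c t ih =>
    intro p b
    simp only [List.cons_append, go, hl']
    have := ih c.h b
    omega

theorem hl'_append (bs : List Blk) (p : ℤ) (b : Blk) : hl' p (bs ++ [b]) = b.h := by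
  induction bs generalizing p with
  | nil => rfl
  | cons c t ih => simp only [List.cons_append, hl']; exact ih c.h

theorem go_mono (bs : List Blk) (p : ℤ) (b : Blk) : go p bs ≤ go p (bs ++ [b]) := by
  have h1 := go_append bs p b
  have h2 : (hl' p bs).natAbs ≤ (hl' p bs - b.h).natAbs + b.h.natAbs := by omega
  omega

theorem hd_le_go_append (bs : List Blk) (b : Blk) :
    b.h.natAbs + b.d.natAbs ≤ go 0 (bs ++ [b]) := by
  have h1 := go_append bs 0 b
  have h2 := hl'_le_go bs 0
  omega

/-! ### norm bounds -/

theorem norm_Bgo : ∀ (bs : List Blk) (p : ℤ),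
    FreeGroup.norm (theta1 ^ p * Bprod bs) ≤ go p bs := by
  intro bs
  induction bs with
  | nil =>
    intro p
    simp only [Bprod_nil, mul_one, go]
    exact norm_theta1_zpow p
  | cons b t ih =>
    intro p
    have he : theta1 ^ p * Bprod (b :: t)
        = (theta1 ^ (p - b.h) * aF ^ b.d * kl b.ε) * (theta1 ^ b.h * Bprod t) := by
      show theta1 ^ p * ((bw b) * Bprod t) = _
      rw [bw]
      group
    rw [he]
    refine le_trans (FreeGroup.norm_mul_le _ _) ?_
    have h1 : FreeGroup.norm (theta1 ^ (p - b.h) * aF ^ b.d * kl b.ε)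
        ≤ (p - b.h).natAbs + b.d.natAbs + 1 := by
      refine le_trans (FreeGroup.norm_mul_le _ _) ?_
      have h2 := norm_theta1_zpow (p - b.h)
      have h3 := norm_aF_zpow b.d
      have h4 := norm_kl b.ε
      have h5 := FreeGroup.norm_mul_le (theta1 ^ (p - b.h)) (aF ^ b.d)
      omega
    have h6 := ih b.h
    simp only [go]
    omega

theorem norm_Bprod (bs : List Blk) : FreeGroup.norm (Bprod bs) ≤ go 0 bs := by
  have := norm_Bgo bs 0
  simpa using this

theorem norm_σw (s : St) :
    FreeGroup.norm (σw s) ≤ go 0 s.bs + s.dl.natAbs + FreeGroup.norm s.u := by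
  refine le_trans (FreeGroup.norm_mul_le _ _) ?_
  have h1 := FreeGroup.norm_mul_le (Bprod s.bs) (aF ^ s.dl)
  have h2 := norm_Bprod s.bs
  have h3 := norm_aF_zpow s.dl
  have h4 := norm_θsub s.u
  omega

theorem norm_σw_led (s : St) : FreeGroup.norm (σw s) ≤ Led s := by
  have := norm_σw s
  unfold Led
  omega

end Iso
namespace Iso

/-! ### θ1-power transports -/

def zw (c : ℤ) : List (Fin 2 × Bool) :=
  if 0 ≤ c then List.replicate c.toNat ((0 : Fin 2), true)
  else List.replicate (-c).toNat ((0 : Fin 2), false)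

theorem ΘW_replicate_true (n : ℕ) : ΘW (List.replicate n ((0 : Fin 2), true)) = theta1 ^ n := by
  induction n with
  | zero => simp [ΘW_nil, pow_zero]
  | succ m ih =>
    rw [List.replicate_succ, ΘW_cons, ih]
    have ht : tl (0 : Fin 2) true = theta1 := rfl
    rw [ht, ← pow_succ', pow_succ']

theorem ΘW_replicate_false (n : ℕ) :
    ΘW (List.replicate n ((0 : Fin 2), false)) = theta1⁻¹ ^ n := by
  induction n with
  | zero => simp [ΘW_nil, pow_zero]
  | succ m ih =>
    rw [List.replicate_succ, ΘW_cons, ih]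
    have ht : tl (0 : Fin 2) false = theta1⁻¹ := rfl
    rw [ht, ← pow_succ']

theorem ΘW_zw (c : ℤ) : ΘW (zw c) = theta1 ^ c := by
  unfold zw
  split
  · rw [ΘW_replicate_true, ← zpow_natCast]
    congr 1
    omega
  · rw [ΘW_replicate_false, inv_pow, ← zpow_natCast, ← zpow_neg]
    congr 1
    omega

theorem eL_replicate (n : ℕ) (b : Bool) :
    eL (List.replicate n ((0 : Fin 2), b)) = n * sg b := by
  induction n with
  | zero => simp [eL_nil]
  | succ m ih =>
    rw [List.replicate_succ, eL_cons, ih]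
    push_cast
    ring

theorem eL_zw (c : ℤ) : eL (zw c) = c := by
  unfold zw
  split <;> rw [eL_replicate] <;> simp [sg] <;> omega

theorem len_zw (c : ℤ) : (zw c).length = c.natAbs := by
  unfold zw
  split <;> simp <;> omega

/-- a-power past θ1-power -/
theorem mvAθ1 (c d : ℤ) :
    Deq (c.natAbs + d.natAbs + 4) (theta1 ^ c * aF ^ d) (aF ^ d * theta1 ^ c) := by
  have := mvAzL (zw c) d
  rwa [ΘW_zw, len_zw] at this

/-- k past θ1-power -/
theorem mvθ1K (c : ℤ) :
    Deq (4 * c.natAbs + 15) (theta1 ^ c * kF) (kF * aF ^ (-c) * theta1 ^ c) := by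
  have := mvKzL (zw c)
  rwa [ΘW_zw, len_zw, eL_zw] at this

/-- k⁻¹ past θ1-power -/
theorem mvθ1K' (c : ℤ) :
    Deq (4 * c.natAbs + 15) (theta1 ^ c * kF⁻¹) (aF ^ c * kF⁻¹ * theta1 ^ c) := by
  have := mvKzL' (zw c)
  rwa [ΘW_zw, len_zw, eL_zw] at this

/-- k-type transport past θsub u -/
theorem mvUK (u : F2) :
    Deq (4 * FreeGroup.norm u + 15) (θsub u * kF) (kF * aF ^ (-(EE u)) * θsub u) := by
  have := mvKzL u.toWord
  rwa [ΘW_toWord, eL_toWord] at this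

theorem mvUK' (u : F2) :
    Deq (4 * FreeGroup.norm u + 15) (θsub u * kF⁻¹) (aF ^ (EE u) * kF⁻¹ * θsub u) := by
  have := mvKzL' u.toWord
  rwa [ΘW_toWord, eL_toWord] at this

theorem mvUA (u : F2) (d : ℤ) :
    Deq (FreeGroup.norm u + d.natAbs + 4) (θsub u * aF ^ d) (aF ^ d * θsub u) := by
  have := mvAzL u.toWord d
  rwa [ΘW_toWord] at this

end Iso
namespace Iso

/-! ### transition steps -/

theorem step_theta (s : St) (j : Fin 2) (b : Bool) :
    Deq 0 (σw s * tl j b)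
      (σw ⟨s.bs, s.dl, s.u * cond b (FreeGroup.of j) (FreeGroup.of j)⁻¹⟩) := by
  cases b
  · refine Deq.of_eq ?_
    show Bprod s.bs * aF ^ s.dl * θsub s.u * tl j false
      = Bprod s.bs * aF ^ s.dl * θsub (s.u * (FreeGroup.of j)⁻¹)
    rw [map_mul, map_inv, θsub_of]
    show _ = _ * _ * (_ * (tl j false))
    group
  · refine Deq.of_eq ?_
    show Bprod s.bs * aF ^ s.dl * θsub s.u * tl j true
      = Bprod s.bs * aF ^ s.dl * θsub (s.u * FreeGroup.of j)
    rw [map_mul, θsub_of]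
    show _ = _ * _ * (_ * (tl j true))
    group

theorem step_a (s : St) (b : Bool) {M : ℕ} (hM : Led s + 10 ≤ M) :
    Deq M (σw s * al b) (σw ⟨s.bs, s.dl + sg b, s.u⟩) := by
  have hgo : FreeGroup.norm (Bprod s.bs * aF ^ s.dl) ≤ go 0 s.bs + s.dl.natAbs := by
    have h1 := FreeGroup.norm_mul_le (Bprod s.bs) (aF ^ s.dl)
    have h2 := norm_Bprod s.bs
    have h3 := norm_aF_zpow s.dl
    omega
  have hsg : (sg b).natAbs = 1 := sg_natAbs b
  have step1 : Deq M
      (Bprod s.bs * aF ^ s.dl * (θsub s.u * aF ^ (sg b)))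
      (Bprod s.bs * aF ^ s.dl * (aF ^ (sg b) * θsub s.u)) := by
    refine (mvUA s.u (sg b)).ctxL _ ?_
    unfold Led at hM
    omega
  refine ((Deq.of_eq ?_).trans step1).trans (Deq.of_eq ?_)
  · rw [al_eq]
    show σw s * _ = _
    unfold σw
    group
  · show _ = Bprod s.bs * aF ^ (s.dl + sg b) * θsub s.u
    rw [zpow_add]
    group

theorem step_k (s : St) (b : Bool) {M : ℕ} (hM : 6 * Led s + 60 ≤ M) :
    Deq M (σw s * kl b) (σw ⟨s.bs ++ [⟨b, -(EE s.u), s.dl⟩], 0, s.u⟩) := by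
  set E := EE s.u with hE
  have hEle : E.natAbs ≤ FreeGroup.norm s.u := EE_natAbs_le s.u
  have hgo : FreeGroup.norm (Bprod s.bs * aF ^ s.dl) ≤ go 0 s.bs + s.dl.natAbs := by
    have h1 := FreeGroup.norm_mul_le (Bprod s.bs) (aF ^ s.dl)
    have h2 := norm_Bprod s.bs
    have h3 := norm_aF_zpow s.dl
    omega
  have hBn := norm_Bprod s.bs
  have hLed : go 0 s.bs + s.dl.natAbs + FreeGroup.norm s.u ≤ Led s := by
    unfold Led; omega
  -- chain B : from σw s' to the common middle form
  have hσ' : σw ⟨s.bs ++ [⟨b, -E, s.dl⟩], 0, s.u⟩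
      = Bprod s.bs * (theta1 ^ E * (aF ^ s.dl * (kl b * (theta1 ^ (-E) * θsub s.u)))) := by
    show Bprod (s.bs ++ [⟨b, -E, s.dl⟩]) * aF ^ (0:ℤ) * θsub s.u = _
    rw [Bprod_append, bw]
    show Bprod s.bs * (theta1 ^ (-(-E)) * aF ^ s.dl * kl b * theta1 ^ (-E)) * aF ^ (0:ℤ)
      * θsub s.u = _
    group
  have stepB1 : Deq M
      (Bprod s.bs * (theta1 ^ E * aF ^ s.dl) * (kl b * (theta1 ^ (-E) * θsub s.u)))
      (Bprod s.bs * (aF ^ s.dl * theta1 ^ E) * (kl b * (theta1 ^ (-E) * θsub s.u))) := by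
    refine (mvAθ1 E s.dl).ctx (Bprod s.bs) _ ?_
    omega
  cases b
  · -- k⁻¹ case
    have stepA : Deq M
        (Bprod s.bs * aF ^ s.dl * (θsub s.u * kF⁻¹))
        (Bprod s.bs * aF ^ s.dl * (aF ^ E * kF⁻¹ * θsub s.u)) := by
      refine (mvUK' s.u).ctxL _ ?_
      omega
    have stepB2 : Deq M
        (Bprod s.bs * aF ^ s.dl * (theta1 ^ E * kF⁻¹) * (theta1 ^ (-E) * θsub s.u))
        (Bprod s.bs * aF ^ s.dl * (aF ^ E * kF⁻¹ * theta1 ^ E) * (theta1 ^ (-E) * θsub s.u))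
        := by
      refine (mvθ1K' E).ctx _ _ ?_
      omega
    have main : Deq M (σw s * kl false)
        (Bprod s.bs * aF ^ s.dl * (aF ^ E * kF⁻¹ * θsub s.u)) := by
      refine (Deq.of_eq ?_).trans stepA
      show σw s * kF⁻¹ = _
      unfold σw
      group
    have main2 : Deq M (σw ⟨s.bs ++ [⟨false, -E, s.dl⟩], 0, s.u⟩)
        (Bprod s.bs * aF ^ s.dl * (aF ^ E * kF⁻¹ * θsub s.u)) := by
      refine (((Deq.of_eq ?_).trans stepB1).trans ((Deq.of_eq ?_).trans stepB2)).trans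
        (Deq.of_eq ?_)
      · rw [hσ']
        show _ = Bprod s.bs * (theta1 ^ E * aF ^ s.dl) * (kl false * (theta1 ^ (-E) * θsub s.u))
        group
      · show _ = Bprod s.bs * aF ^ s.dl * (theta1 ^ E * kF⁻¹) * (theta1 ^ (-E) * θsub s.u)
        show Bprod s.bs * (aF ^ s.dl * theta1 ^ E) * (kl false * (theta1 ^ (-E) * θsub s.u)) = _
        show _ * (kF⁻¹ * _) = _
        group
      · group
    exact main.trans main2.symm
  · -- k case
    have stepA : Deq M
        (Bprod s.bs * aF ^ s.dl * (θsub s.u * kF))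
        (Bprod s.bs * aF ^ s.dl * (kF * aF ^ (-E) * θsub s.u)) := by
      refine (mvUK s.u).ctxL _ ?_
      omega
    have stepB2 : Deq M
        (Bprod s.bs * aF ^ s.dl * (theta1 ^ E * kF) * (theta1 ^ (-E) * θsub s.u))
        (Bprod s.bs * aF ^ s.dl * (kF * aF ^ (-E) * theta1 ^ E) * (theta1 ^ (-E) * θsub s.u))
        := by
      refine (mvθ1K E).ctx _ _ ?_
      omega
    have main : Deq M (σw s * kl true)
        (Bprod s.bs * aF ^ s.dl * (kF * aF ^ (-E) * θsub s.u)) := by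
      refine (Deq.of_eq ?_).trans stepA
      show σw s * kF = _
      unfold σw
      group
    have main2 : Deq M (σw ⟨s.bs ++ [⟨true, -E, s.dl⟩], 0, s.u⟩)
        (Bprod s.bs * aF ^ s.dl * (kF * aF ^ (-E) * θsub s.u)) := by
      refine (((Deq.of_eq ?_).trans stepB1).trans ((Deq.of_eq ?_).trans stepB2)).trans
        (Deq.of_eq ?_)
      · rw [hσ']
        show _ = Bprod s.bs * (theta1 ^ E * aF ^ s.dl) * (kl true * (theta1 ^ (-E) * θsub s.u))
        group
      · show Bprod s.bs * (aF ^ s.dl * theta1 ^ E) * (kl true * (theta1 ^ (-E) * θsub s.u)) = _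
        show _ * (kF * _) = _
        group
      · group
    exact main.trans main2.symm

/-! ### ledger bounds -/

theorem led_theta (s : St) (j : Fin 2) (b : Bool) :
    Led ⟨s.bs, s.dl, s.u * cond b (FreeGroup.of j) (FreeGroup.of j)⁻¹⟩ ≤ Led s + 5 := by
  set w2 : F2 := cond b (FreeGroup.of j) (FreeGroup.of j)⁻¹ with hw
  have h1 : FreeGroup.norm (s.u * w2) ≤ FreeGroup.norm s.u + 1 := by
    refine le_trans (FreeGroup.norm_mul_le _ _) ?_
    have : FreeGroup.norm w2 ≤ 1 := by
      cases b <;> simp [hw, FreeGroup.norm_inv_eq, FreeGroup.norm_of]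
    omega
  have h2 : EE (s.u * w2) = EE s.u + sg b := by
    rw [EE_mul]
    cases b
    · rw [hw]; show EE s.u + EE (FreeGroup.of j)⁻¹ = _; rw [EE_inv_of]; rfl
    · rw [hw]; show EE s.u + EE (FreeGroup.of j) = _; rw [EE_of]; rfl
  have h3 : sg b = 1 ∨ sg b = -1 := by cases b <;> simp [sg]
  unfold Led
  simp only [h2]
  omega

theorem led_a (s : St) (b : Bool) :
    Led ⟨s.bs, s.dl + sg b, s.u⟩ ≤ Led s + 1 := by
  have h3 : sg b = 1 ∨ sg b = -1 := by cases b <;> simp [sg]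
  unfold Led
  dsimp only
  omega

theorem led_k (s : St) (b : Bool) :
    Led ⟨s.bs ++ [⟨b, -(EE s.u), s.dl⟩], 0, s.u⟩ ≤ Led s + 1 := by
  have hga := go_append s.bs 0 ⟨b, -(EE s.u), s.dl⟩
  have hha := hl'_append s.bs 0 ⟨b, -(EE s.u), s.dl⟩
  have hgl := hl'_le_go s.bs 0
  unfold Led
  dsimp only
  simp only [hha]
  dsimp only at hga
  omega

end Iso
namespace Iso

/-! ### dispatch and main loop -/

theorem mk_single_true' {α : Type*} (j : α) : FreeGroup.mk [(j, true)] = FreeGroup.of j := rfl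

theorem mk_single_false' {α : Type*} (j : α) :
    FreeGroup.mk [(j, false)] = (FreeGroup.of j)⁻¹ := by
  rw [← mk_single_true', FreeGroup.inv_mk]
  simp [FreeGroup.invRev]

theorem mk_cons' {α : Type*} (p : α × Bool) (t : List (α × Bool)) :
    FreeGroup.mk (p :: t) = FreeGroup.mk [p] * FreeGroup.mk t := by
  rw [FreeGroup.mul_mk]; rfl

theorem step (s : St) (x : Fin 4 × Bool) {M : ℕ} (hM : 6 * Led s + 60 ≤ M) :
    ∃ s' : St, Deq M (σw s * cond x.2 (FreeGroup.of x.1) (FreeGroup.of x.1)⁻¹) (σw s')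
      ∧ Led s' ≤ Led s + 5 := by
  rcases x with ⟨i, b⟩
  fin_cases i
  · refine ⟨_, ?_, le_trans (led_theta s 0 b) (by omega)⟩
    exact (step_theta s 0 b).mono (by omega)
  · refine ⟨_, ?_, le_trans (led_theta s 1 b) (by omega)⟩
    exact (step_theta s 1 b).mono (by omega)
  · refine ⟨_, ?_, le_trans (led_a s b) (by omega)⟩
    exact step_a s b (by omega)
  · refine ⟨_, ?_, le_trans (led_k s b) (by omega)⟩
    exact step_k s b (by omega)

theorem loop : ∀ (l : List (Fin 4 × Bool)) (s : St) {M : ℕ},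
    6 * Led s + 30 * l.length + 60 ≤ M →
    ∃ s', Deq M (σw s * FreeGroup.mk l) (σw s') ∧ Led s' ≤ Led s + 5 * l.length := by
  intro l
  induction l with
  | nil =>
    intro s M _
    refine ⟨s, Deq.of_eq ?_, by omega⟩
    have h1 : FreeGroup.mk ([] : List (Fin 4 × Bool)) = 1 := rfl
    rw [h1, mul_one]
  | cons x t ih =>
    intro s M hM
    obtain ⟨s1, hd1, hl1⟩ := step s x (M := M) (by omega)
    obtain ⟨s2, hd2, hl2⟩ := ih s1 (M := M) (by simp only [List.length_cons] at hM; omega)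
    refine ⟨s2, ?_, by simp only [List.length_cons]; omega⟩
    have e : FreeGroup.mk (x :: t)
        = (cond x.2 (FreeGroup.of x.1) (FreeGroup.of x.1)⁻¹) * FreeGroup.mk t := by
      rw [mk_cons']
      congr 1
      rcases x with ⟨i, b⟩
      cases b
      · exact mk_single_false' i
      · exact mk_single_true' i
    exact ((Deq.of_eq (by rw [e]; group)).trans (hd1.mul_right (FreeGroup.mk t))).trans hd2

end Iso
namespace Iso

/-! ### uncompression -/

theorem blk_unc (b : Blk) {M : ℕ} (hM : 10 * b.h.natAbs + 2 * b.d.natAbs + 60 ≤ M) :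
    Deq M (bw b) (ι (bv b)) := by
  rcases b with ⟨e, h, d⟩
  dsimp only at hM
  have step1 : Deq M ((theta1 ^ (-h) * aF ^ d) * (kl e * theta1 ^ h))
      ((aF ^ d * theta1 ^ (-h)) * (kl e * theta1 ^ h)) := by
    refine ((mvAθ1 (-h) d).mul_right _).mono ?_
    simp only [Int.natAbs_neg]
    omega
  cases e
  · -- k⁻¹ block
    have step2 : Deq M (aF ^ d * (theta1 ^ (-h) * kF⁻¹) * theta1 ^ h)
        (aF ^ d * (aF ^ (-h) * kF⁻¹ * theta1 ^ (-h)) * theta1 ^ h) := by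
      refine (mvθ1K' (-h)).ctx (aF ^ d) (theta1 ^ h) ?_
      have h1 := norm_aF_zpow d
      simp only [Int.natAbs_neg]
      omega
    have hι : ι (bv ⟨false, h, d⟩) = aF ^ d * (kF * aF ^ h)⁻¹ := by
      show ι (a2 ^ d * (k2 * a2 ^ h)⁻¹) = _
      rw [map_mul, map_inv, map_mul, map_zpow, map_zpow, ι_a2, ι_k2]
    refine (((Deq.of_eq ?_).trans step1).trans ((Deq.of_eq ?_).trans step2)).trans (Deq.of_eq ?_)
    · show bw ⟨false, h, d⟩ = _
      rw [bw]
      group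
    · have hklf : kl false = kF⁻¹ := rfl
      rw [← hklf]
      group
    · rw [hι]
      show aF ^ d * (aF ^ (-h) * kF⁻¹ * theta1 ^ (-h)) * theta1 ^ h = _
      group
  · -- k block
    have step2 : Deq M (aF ^ d * (theta1 ^ (-h) * kF) * theta1 ^ h)
        (aF ^ d * (kF * aF ^ (-(-h)) * theta1 ^ (-h)) * theta1 ^ h) := by
      refine (mvθ1K (-h)).ctx (aF ^ d) (theta1 ^ h) ?_
      have h1 := norm_aF_zpow d
      simp only [Int.natAbs_neg]
      omega
    have hι : ι (bv ⟨true, h, d⟩) = aF ^ d * (kF * aF ^ h) := by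
      show ι (a2 ^ d * (k2 * a2 ^ h)) = _
      rw [map_mul, map_mul, map_zpow, map_zpow, ι_a2, ι_k2]
    refine (((Deq.of_eq ?_).trans step1).trans ((Deq.of_eq ?_).trans step2)).trans (Deq.of_eq ?_)
    · show bw ⟨true, h, d⟩ = _
      rw [bw]
      group
    · have hklt : kl true = kF := rfl
      rw [← hklt]
      group
    · rw [hι]
      show aF ^ d * (kF * aF ^ (-(-h)) * theta1 ^ (-h)) * theta1 ^ h = _
      group

theorem uncomp (bs : List Blk) : ∀ (y : F2) {M : ℕ}, 12 * go 0 bs + 100 ≤ M →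
    Deq M (Bprod bs * ι y) (ι (vB bs * y)) := by
  induction bs using List.reverseRecOn with
  | nil =>
    intro y M _
    refine Deq.of_eq ?_
    show Bprod [] * ι y = ι (vB [] * y)
    rw [Bprod_nil]
    have : vB [] = 1 := rfl
    rw [this, one_mul, one_mul]
  | append_singleton bs b ih =>
    intro y M hM
    have hmono := go_mono bs 0 b
    have hhd := hd_le_go_append bs b
    have hBn := norm_Bprod bs
    have step1 : Deq M (Bprod bs * (bw b * ι y)) (Bprod bs * (ι (bv b) * ι y)) := by
      refine ((blk_unc b (M := 10 * b.h.natAbs + 2 * b.d.natAbs + 60)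
        le_rfl).mul_right (ι y)).ctxL (Bprod bs) ?_
      omega
    have step2 : Deq M (Bprod bs * ι (bv b * y)) (ι (vB bs * (bv b * y))) :=
      ih (bv b * y) (by omega)
    refine (((Deq.of_eq ?_).trans step1).trans ((Deq.of_eq ?_).trans step2)).trans (Deq.of_eq ?_)
    · rw [Bprod_append]; group
    · rw [map_mul]
    · congr 1
      rw [vB_append]
      group

/-! ### hom computations on states -/

theorem Bprod_cons (b : Blk) (t : List Blk) : Bprod (b :: t) = bw b * Bprod t := by
  simp [Bprod]

theorem Qf_kl (b : Bool) : Qf (kl b) = 1 := by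
  cases b
  · show Qf kF⁻¹ = 1; rw [map_inv, Qf_kF, inv_one]
  · exact Qf_kF

theorem Qf_bw (b : Blk) : Qf (bw b) = 1 := by
  rw [bw]
  simp only [map_mul, map_zpow, Qf_theta1, Qf_aF, Qf_kl, one_mul, mul_one, one_zpow]
  group

theorem Qf_Bprod (bs : List Blk) : Qf (Bprod bs) = 1 := by
  induction bs with
  | nil => rw [Bprod_nil, map_one]
  | cons b t ih => rw [Bprod_cons, map_mul, Qf_bw, ih, one_mul]

theorem Qf_σw (s : St) : Qf (σw s) = s.u := by
  rw [σw, map_mul, map_mul, Qf_Bprod, map_zpow, Qf_aF, Qf_θsub]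
  group

open SemidirectProduct in
theorem Ψf_theta1 : Ψf theta1 = inr tψ := by simp [Ψf, theta1]
open SemidirectProduct in
theorem Ψf_aF : Ψf aF = inl a2 := by simp [Ψf, aF]
open SemidirectProduct in
theorem Ψf_kF : Ψf kF = inl k2 := by simp [Ψf, kF]

theorem tψ_zpow (c : ℤ) : Multiplicative.toAdd (tψ ^ c) = -c := by
  rw [Int.toAdd_zpow]
  simp [tψ]

open SemidirectProduct in
theorem Ψf_bw (b : Blk) : Ψf (bw b) = inl (bv b) := by
  rcases b with ⟨e, h, d⟩
  have hx : ∀ x : F2, (inr (tψ ^ (-h)) : S) * inl x * inr (tψ ^ h) = inl ((A ^ h) x) := by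
    intro x
    have h1 := SemidirectProduct.inl_aut (φ := φA) (tψ ^ (-h)) x
    have h2 : φA (tψ ^ (-h)) = A ^ h := by
      rw [φA_apply, tψ_zpow]
      norm_num
    rw [h2] at h1
    have h3 : (inr (tψ ^ h) : S) = inr ((tψ ^ (-h))⁻¹) := by
      congr 1
      group
    rw [h3]
    exact h1.symm
  have hkl : Ψf (kl e) = inl (cond e k2 k2⁻¹) := by
    cases e
    · show Ψf kF⁻¹ = _; rw [map_inv, Ψf_kF]; rfl
    · exact Ψf_kF
  have hth : ∀ c : ℤ, Ψf (theta1 ^ c) = inr (tψ ^ c) := by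
    intro c
    rw [map_zpow, Ψf_theta1, map_zpow]
  have ha : Ψf (aF ^ d) = inl (a2 ^ d) := by
    rw [map_zpow, Ψf_aF, map_zpow]
  have hbw : bw ⟨e, h, d⟩ = theta1 ^ (-h) * aF ^ d * kl e * theta1 ^ h := rfl
  rw [hbw, map_mul, map_mul, map_mul, hth, hth, ha, hkl]
  have e1 : (inr (tψ ^ (-h)) : S) * inl (a2 ^ d) * inl (cond e k2 k2⁻¹) * inr (tψ ^ h)
      = inr (tψ ^ (-h)) * inl (a2 ^ d * cond e k2 k2⁻¹) * inr (tψ ^ h) := by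
    rw [map_mul]
    group
  rw [e1, hx]
  congr 1
  rw [map_mul, Az_zpow_a]
  cases e
  · show a2 ^ d * (A ^ h) k2⁻¹ = bv ⟨false, h, d⟩
    rw [map_inv, Az_k]
    rfl
  · show a2 ^ d * (A ^ h) k2 = bv ⟨true, h, d⟩
    rw [Az_k]
    rfl

theorem vB_cons (b : Blk) (t : List Blk) : vB (b :: t) = bv b * vB t := by
  simp [vB]

open SemidirectProduct in
theorem Ψf_Bprod (bs : List Blk) : Ψf (Bprod bs) = inl (vB bs) := by
  induction bs with
  | nil =>
    rw [Bprod_nil, map_one]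
    rfl
  | cons b t ih =>
    rw [Bprod_cons, map_mul, Ψf_bw, ih, ← map_mul, vB_cons]

end Iso
namespace Iso

/-! ### final assembly -/

theorem main_D {w : F4} (h : π w = 1) : D (100 * FreeGroup.norm w + 100) w := by
  set n := FreeGroup.norm w with hn
  set M := 100 * n + 100 with hM
  set s0 : St := ⟨[], 0, 1⟩ with hs0
  have hled0 : Led s0 = 0 := by
    simp [Led, hs0, go, hl', EE_one, FreeGroup.norm_one]
  have hσ0 : σw s0 = 1 := by
    show Bprod [] * aF ^ (0 : ℤ) * θsub 1 = 1
    rw [Bprod_nil, map_one]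
    group
  have hlen : w.toWord.length = n := rfl
  obtain ⟨sf, hdeq, hled⟩ := loop w.toWord s0 (M := M) (by rw [hled0, hlen, hM]; omega)
  have hdeq' : Deq M w (σw sf) := by
    refine (Deq.of_eq ?_).trans hdeq
    rw [hσ0, one_mul, FreeGroup.mk_toWord]
  have hledf : Led sf ≤ 5 * n := by rw [hled0, hlen] at hled; omega
  -- the normal form is in the normal closure
  have hwnc : w ∈ Subgroup.normalClosure rels := mem_nc_of_pi_one h
  have hdnc : w * (σw sf)⁻¹ ∈ Subgroup.normalClosure rels := D.mem_nc hdeq'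
  have hσnc : σw sf ∈ Subgroup.normalClosure rels := by
    have e : σw sf = (w * (σw sf)⁻¹)⁻¹ * w := by group
    rw [e]
    exact Subgroup.mul_mem _ (Subgroup.inv_mem _ hdnc) hwnc
  -- extract triviality of the components
  have hu : sf.u = 1 := by
    have h1 : Qf (σw sf) = 1 := kill_of_mem_nc _ QK hσnc
    rwa [Qf_σw] at h1
  have hv : vB sf.bs * a2 ^ sf.dl = 1 := by
    have h1 : Ψf (σw sf) = 1 := kill_of_mem_nc _ ΨK hσnc
    have h2 : Ψf (σw sf) = SemidirectProduct.inl (vB sf.bs * a2 ^ sf.dl) := by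
      rw [σw, map_mul, map_mul, Ψf_Bprod, hu, map_one, map_one, mul_one, map_zpow, Ψf_aF,
        ← map_zpow, ← map_mul]
    refine SemidirectProduct.inl_injective (φ := φA) ?_
    rw [← h2, h1, map_one]
  -- uncompress : σw sf is filled by bounded conjugates
  have hgof : go 0 sf.bs ≤ Led sf := by unfold Led; omega
  have hend : D M (σw sf) := by
    have e1 : σw sf = Bprod sf.bs * ι (a2 ^ sf.dl) := by
      rw [σw, hu, map_one, mul_one, map_zpow, ι_a2]
    have h2 := uncomp sf.bs (a2 ^ sf.dl) (M := M) (by rw [hM]; omega)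
    rw [hv, map_one] at h2
    exact D.of_deq_one ((Deq.of_eq e1).trans h2)
  exact hdeq'.d hend

end Iso

/-- `G` has a linear isodiametric function: there is `C > 0` such that every word `w`
trivial in `G` is a product, in the free group, of conjugates of relators (or their
inverses) whose conjugators all have length at most `C·|w| + C`. -/
theorem linear_isodiametric_function :
    ∃ C : ℕ, 0 < C ∧
      ∀ w : FreeGroup (Fin 4), π w = 1 →
        ∃ L : List (FreeGroup (Fin 4)),
          L.prod = w ∧
          ∀ g ∈ L, ∃ x : FreeGroup (Fin 4),
            FreeGroup.norm x ≤ C * FreeGroup.norm w + C ∧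
            ∃ r ∈ rels, g = x⁻¹ * r * x ∨ g = x⁻¹ * r⁻¹ * x := by
  refine ⟨100, by norm_num, ?_⟩
  intro w hw
  obtain ⟨L, hL, hh⟩ := Iso.main_D hw
  exact ⟨L, hL, fun g hg => hh g hg⟩
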